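/- Let X be a separable Banach space and let {ℓ_k}_{k∈ℕ} ⊂ X* be a sequence of continuous linear functionals whose linear span is dense in X*. Let d ∈ ℕ and let μ be a Borel probability measure on X satisfying Assumption (d). Then there exist d₀ ∈ ℕ, coefficients a_{jk} ∈ ℝ (j=1,…,d, k=1,…,d₀), biases b_j ∈ ℝ, and a constant c > 0 such that the affine encoder E: X → ℝ^d with components E_j(u) = b_j + Σ_{k=1}^{d₀} a_{jk}ℓ_k(u) satisfies E_#μ ≥ c·Unif([0,1]^d). -/

import Mathlib

set_option maxHeartbeats 1000000
set_option synthInstance.maxHeartbeats 1000000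
set_option linter.unusedVariables false


open MeasureTheory ENNReal

noncomputable section

/-- The unit cube `[0,1]^d`. -/
def unitCube (d : ℕ) : Set (Fin d → ℝ) := Set.Icc 0 1

/-- The uniform (Lebesgue) measure on the unit cube `[0,1]^d`. -/
def cubeVol (d : ℕ) : Measure (Fin d → ℝ) := volume.restrict (unitCube d)

/-- The product measure on `ℝ^d` with density `∏_j ρ_j(z_j)` w.r.t. Lebesgue measure. -/
def productLaw {d : ℕ} (ρ : Fin d → ℝ → ℝ) : Measure (Fin d → ℝ) :=
  volume.withDensity fun z => ENNReal.ofReal (∏ j, ρ j (z j))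

/-- **Assumption (d).** The measure `μ` is the law of `u = ξ + ∑_{j=1}^d y_j e_j`,
where `e_1, …, e_d` are linearly independent with biorthogonal functionals
`e_1^*, …, e_d^*`, the coordinates `(y_1, …, y_d)` have a product law with densities
`ρ_j` each bounded below by a positive constant (a.e.) on some non-trivial interval,
and `ξ` is independent of `y` with `e_j^*(ξ) = 0` almost surely. -/
def AssumptionD {X : Type*} [NormedAddCommGroup X] [NormedSpace ℝ X] [MeasurableSpace X]
    (μ : Measure X) (d : ℕ) (e : Fin d → X) (estar : Fin d → X → ℝ) : Prop :=
  LinearIndependent ℝ e ∧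
  (∀ j k, estar j (e k) = if j = k then 1 else 0) ∧
  ∃ ρ : Fin d → ℝ → ℝ,
    (∀ j, (∀ z, 0 ≤ ρ j z) ∧ Integrable (ρ j) ∧ ∫ z, ρ j z = 1) ∧
    (∀ j, ∃ a b : ℝ, a < b ∧ ∃ ε : ℝ, 0 < ε ∧
      ∀ᵐ z ∂(volume.restrict (Set.Ioo a b)), ε ≤ ρ j z) ∧
    ∃ (Ξ : Type) (_ : MeasurableSpace Ξ) (P : Measure Ξ) (_ : IsProbabilityMeasure P)
      (y : Ξ → Fin d → ℝ) (ξv : Ξ → X),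
      Measurable y ∧ Measurable ξv ∧
      ProbabilityTheory.IndepFun y ξv P ∧
      Measure.map y P = productLaw ρ ∧
      (∀ j, ∀ᵐ ω ∂P, estar j (ξv ω) = 0) ∧
      μ = Measure.map (fun ω => ξv ω + ∑ j, y ω j • e j) P

/- ## Auxiliary lemmas -/


lemma null_cyl {d : ℕ} (j : Fin d) {N : Set ℝ} (h : volume N = 0) :
    volume {z : Fin d → ℝ | z j ∈ N} = 0 := by
  have : {z : Fin d → ℝ | z j ∈ N} = Set.univ.pi (Function.update (fun _ => Set.univ) j N) := by
    ext z
    simp only [Set.mem_setOf_eq, Set.mem_pi, Set.mem_univ, forall_true_left]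
    constructor
    · intro hz i
      rcases eq_or_ne i j with rfl | hij
      · simpa using hz
      · simp [Function.update_of_ne hij]
    · intro hz
      simpa using hz j
  rw [this, volume_pi_pi]
  exact Finset.prod_eq_zero (Finset.mem_univ j) (by simp [h])

lemma exists_cube_pos {d : ℕ} (ν : Measure (Fin d → ℝ)) [IsProbabilityMeasure ν]
    (η : Fin d → ℝ) (hη : ∀ j, 0 < η j) :
    ∃ t : Fin d → ℝ, 0 < ν (Set.Icc t (fun j => t j + η j)) := by
  by_contra h
  push_neg at h
  have h0 : ∀ t : Fin d → ℝ, ν (Set.Icc t (fun j => t j + η j)) = 0 :=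
    fun t => le_antisymm (h t) (by simp)
  have hcover : (Set.univ : Set (Fin d → ℝ)) ⊆
      ⋃ z : Fin d → ℤ, Set.Icc (fun j => η j * z j) (fun j => η j * z j + η j) := by
    intro x _
    refine Set.mem_iUnion.2 ⟨fun j => ⌊x j / η j⌋, ?_⟩
    constructor <;> intro j
    · have h1 := Int.floor_le (x j / η j)
      have := mul_le_mul_of_nonneg_left h1 (le_of_lt (hη j))
      rwa [mul_comm (η j) (x j / η j), div_mul_cancel₀ _ (ne_of_gt (hη j))] at this
    · have h1 := (Int.lt_floor_add_one (x j / η j)).le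
      have h2 := mul_le_mul_of_nonneg_left h1 (le_of_lt (hη j))
      rw [mul_comm (η j) (x j / η j), div_mul_cancel₀ _ (ne_of_gt (hη j))] at h2
      calc x j ≤ η j * (⌊x j / η j⌋ + 1) := h2
        _ = η j * ⌊x j / η j⌋ + η j := by ring
  have : ν (Set.univ : Set (Fin d → ℝ)) = 0 :=
    measure_mono_null hcover (measure_iUnion_null fun z => h0 _)
  simp [measure_univ] at this

lemma vol_affine_preimage {d : ℕ} (s m : Fin d → ℝ) (hs : ∀ j, s j ≠ 0) (B : Set (Fin d → ℝ)) :
    volume ((fun (z : Fin d → ℝ) (j : Fin d) => (z j - m j) / s j) ⁻¹' B)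
      = ENNReal.ofReal (∏ j, |s j|) * volume B := by
  set L : (Fin d → ℝ) →ₗ[ℝ] (Fin d → ℝ) := Matrix.toLin' (Matrix.diagonal fun j => (s j)⁻¹) with hL
  have hLdet : LinearMap.det L = ∏ j, (s j)⁻¹ := by
    rw [hL, LinearMap.det_toLin', Matrix.det_diagonal]
  have hdet0 : LinearMap.det L ≠ 0 := by
    rw [hLdet]
    exact Finset.prod_ne_zero_iff.2 fun j _ => inv_ne_zero (hs j)
  have hcomp : (fun (z : Fin d → ℝ) (j : Fin d) => (z j - m j) / s j)
      = (fun z => L z) ∘ (fun z => -m + z) := by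
    funext z j
    have hLa : L (-m + z) j = (s j)⁻¹ * ((-m + z) j) := by
      rw [hL]
      simp [Matrix.toLin'_apply, Matrix.mulVec_diagonal]
    rw [Function.comp_apply, hLa]
    simp only [Pi.add_apply, Pi.neg_apply]
    rw [div_eq_inv_mul]
    ring
  rw [hcomp, Set.preimage_comp, measure_preimage_add volume (-m) _,
    Measure.addHaar_preimage_linearMap volume hdet0]
  congr 1
  rw [hLdet, ← Finset.prod_inv_distrib, Finset.abs_prod]
  congr 1
  exact Finset.prod_congr rfl fun j _ => by rw [inv_inv]

lemma productLaw_lower {d : ℕ} (ρ : Fin d → ℝ → ℝ) (α β ε : Fin d → ℝ)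
    (hε : ∀ j, 0 < ε j)
    (hae : ∀ j, ∀ᵐ z ∂(volume.restrict (Set.Ioo (α j) (β j))), ε j ≤ ρ j z)
    {S : Set (Fin d → ℝ)} (hSm : MeasurableSet S)
    (hSsub : S ⊆ Set.univ.pi fun j => Set.Icc (α j) (β j)) :
    ENNReal.ofReal (∏ j, ε j) * volume S ≤ productLaw ρ S := by
  have hb : ∀ j, ∃ N : Set ℝ, MeasurableSet N ∧ volume N = 0 ∧
      ∀ z ∈ Set.Ioo (α j) (β j), z ∉ N → ε j ≤ ρ j z := by
    intro j
    have h := (ae_iff.mp (hae j))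
    obtain ⟨N, hNsub, hNm, hN0⟩ := exists_measurable_superset_of_null h
    refine ⟨N ∩ Set.Ioo (α j) (β j), hNm.inter measurableSet_Ioo, ?_, ?_⟩
    · rw [Measure.restrict_apply hNm] at hN0
      exact hN0
    · intro z hz hzn
      by_contra hc
      exact hzn ⟨hNsub hc, hz⟩
  choose N hNm hN0 hNgood using hb
  set G : Set (Fin d → ℝ) := Set.univ.pi fun j => Set.Ioo (α j) (β j) \ N j with hG
  have hGm : MeasurableSet G :=
    MeasurableSet.univ_pi fun j => measurableSet_Ioo.diff (hNm j)
  have hpt : ∀ z, G.indicator (fun _ => ENNReal.ofReal (∏ j, ε j)) z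
      ≤ ENNReal.ofReal (∏ j, ρ j (z j)) := by
    intro z
    by_cases hz : z ∈ G
    · rw [Set.indicator_of_mem hz]
      refine ENNReal.ofReal_le_ofReal ?_
      refine Finset.prod_le_prod (fun j _ => (hε j).le) (fun j _ => ?_)
      have hzj := hz j (Set.mem_univ j)
      exact hNgood j _ hzj.1 hzj.2
    · rw [Set.indicator_of_notMem hz]
      simp
  have hmono : volume.withDensity (G.indicator fun _ => ENNReal.ofReal (∏ j, ε j))
      ≤ productLaw ρ :=
    withDensity_mono (Filter.Eventually.of_forall hpt)
  have hdiffnull : volume (S \ G) = 0 := by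
    have hsub : S \ G ⊆ ⋃ j, {z : Fin d → ℝ | z j ∈ (N j ∪ {α j, β j})} := by
      intro z ⟨hzS, hzG⟩
      rw [hG] at hzG
      simp only [Set.mem_pi, Set.mem_univ, forall_true_left, not_forall] at hzG
      obtain ⟨j, hj⟩ := hzG
      refine Set.mem_iUnion.2 ⟨j, ?_⟩
      have hzj := hSsub hzS j (Set.mem_univ j)
      by_cases hio : z j ∈ Set.Ioo (α j) (β j)
      · have : z j ∈ N j := by
          by_contra hc
          exact hj ⟨hio, hc⟩
        exact Or.inl this
      · right
        rcases eq_or_lt_of_le hzj.1 with h1 | h1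
        · simp [← h1]
        · rcases eq_or_lt_of_le hzj.2 with h2 | h2
          · simp [h2]
          · exact absurd ⟨h1, h2⟩ hio
    refine measure_mono_null hsub (measure_iUnion_null fun j => ?_)
    refine null_cyl j ?_
    refine measure_union_null (hN0 j) ?_
    have : ({α j, β j} : Set ℝ) = {α j} ∪ {β j} := rfl
    rw [this]
    exact measure_union_null Real.volume_singleton Real.volume_singleton
  have hSle : volume S ≤ volume (S ∩ G) := by
    calc volume S = volume ((S ∩ G) ∪ (S \ G)) := by rw [Set.inter_union_diff]
      _ ≤ volume (S ∩ G) + volume (S \ G) := measure_union_le _ _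
      _ = volume (S ∩ G) := by rw [hdiffnull, add_zero]
  calc ENNReal.ofReal (∏ j, ε j) * volume S
      ≤ ENNReal.ofReal (∏ j, ε j) * volume (S ∩ G) := by gcongr
    _ = ((volume.restrict G).withDensity fun _ => ENNReal.ofReal (∏ j, ε j)) S := by
        rw [withDensity_const, Measure.smul_apply, Measure.restrict_apply hSm, smul_eq_mul]
    _ = (volume.withDensity (G.indicator fun _ => ENNReal.ofReal (∏ j, ε j))) S := by
        rw [withDensity_indicator hGm]
    _ ≤ productLaw ρ S := hmono S

lemma exists_biorth_span {X : Type*} [NormedAddCommGroup X] [NormedSpace ℝ X]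
    (lk : ℕ → X →L[ℝ] ℝ)
    (hdense : Dense (Submodule.span ℝ (Set.range lk) : Set (X →L[ℝ] ℝ)))
    {d : ℕ} (e : Fin d → X) (estar : Fin d → X →L[ℝ] ℝ)
    (hbio : ∀ j k, estar j (e k) = if j = k then 1 else 0) :
    ∃ f : Fin d → X →L[ℝ] ℝ, (∀ j, f j ∈ Submodule.span ℝ (Set.range lk)) ∧
      ∀ j k, f j (e k) = if j = k then 1 else 0 := by
  set Φ : (X →L[ℝ] ℝ) →ₗ[ℝ] (Fin d → ℝ) :=
    { toFun := fun g => fun k => g (e k)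
      map_add' := fun g h => by funext k; simp
      map_smul' := fun c g => by funext k; simp } with hΦ
  have hΦcont : Continuous Φ := by
    apply continuous_pi
    intro k
    exact (ContinuousLinearMap.apply ℝ ℝ (e k)).continuous
  set M : Submodule ℝ (Fin d → ℝ) := Submodule.map Φ (Submodule.span ℝ (Set.range lk)) with hM
  have hMclosed : IsClosed (M : Set (Fin d → ℝ)) := Submodule.closed_of_finiteDimensional M
  have htop : ∀ v : Fin d → ℝ, v ∈ M := by
    intro v
    set g : X →L[ℝ] ℝ := ∑ j, v j • estar j with hg
    have hΦg : Φ g = v := by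
      funext k
      simp only [hΦ, hg, LinearMap.coe_mk, AddHom.coe_mk]
      rw [ContinuousLinearMap.sum_apply]
      simp only [ContinuousLinearMap.smul_apply, hbio, smul_eq_mul, mul_ite, mul_one, mul_zero]
      simp [Finset.sum_ite_eq]
    have hgmem : g ∈ closure (Submodule.span ℝ (Set.range lk) : Set (X →L[ℝ] ℝ)) := by
      rw [hdense.closure_eq]; trivial
    have : Φ g ∈ closure (Φ '' (Submodule.span ℝ (Set.range lk) : Set (X →L[ℝ] ℝ))) :=
      image_closure_subset_closure_image hΦcont (Set.mem_image_of_mem Φ hgmem)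
    rw [hΦg] at this
    have himg : Φ '' (Submodule.span ℝ (Set.range lk) : Set (X →L[ℝ] ℝ))
        = (M : Set (Fin d → ℝ)) := rfl
    rw [himg, hMclosed.closure_eq] at this
    exact this
  have hex : ∀ j : Fin d, ∃ g ∈ Submodule.span ℝ (Set.range lk),
      Φ g = (fun k => if j = k then 1 else 0) := by
    intro j
    obtain ⟨g, hgmem, hgeq⟩ := htop (fun k => if j = k then (1:ℝ) else 0)
    exact ⟨g, hgmem, hgeq⟩
  choose f hfmem hfeq using hex
  refine ⟨f, hfmem, fun j k => ?_⟩
  have := congrFun (hfeq j) k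
  simpa [hΦ] using this

lemma exists_fin_rep {X : Type*} [NormedAddCommGroup X] [NormedSpace ℝ X]
    (lk : ℕ → X →L[ℝ] ℝ) {d : ℕ} (f : Fin d → X →L[ℝ] ℝ)
    (hf : ∀ j, f j ∈ Submodule.span ℝ (Set.range lk)) :
    ∃ (d₀ : ℕ) (A : Fin d → Fin d₀ → ℝ), ∀ j u, (∑ k : Fin d₀, A j k * lk k u) = f j u := by
  have hc : ∀ j, ∃ c : ℕ →₀ ℝ, (c.sum fun i a => a • lk i) = f j := by
    intro j
    exact Finsupp.mem_span_range_iff_exists_finsupp.mp (hf j)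
  choose c hc using hc
  set d₀ : ℕ := (Finset.univ.sup fun j => (c j).support.sup id) + 1 with hd₀
  refine ⟨d₀, fun j k => c j k, fun j u => ?_⟩
  have hsupp : (c j).support ⊆ Finset.range d₀ := by
    intro i hi
    rw [Finset.mem_range, hd₀]
    have h1 : i ≤ (c j).support.sup id := Finset.le_sup (f := id) hi
    have h2 : (c j).support.sup id ≤ Finset.univ.sup fun j => (c j).support.sup id :=
      Finset.le_sup (f := fun j => (c j).support.sup id) (Finset.mem_univ j)
    omega
  have h1 : f j u = ((c j).sum fun i a => a • lk i) u := by rw [hc j]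
  rw [h1]
  have h2 : ((c j).sum fun i a => a • lk i) u = (c j).sum fun i a => a * lk i u := by
    rw [Finsupp.sum]
    rw [ContinuousLinearMap.sum_apply]
    exact Finset.sum_congr rfl fun i _ => rfl
  rw [h2]
  rw [Finsupp.sum_of_support_subset (c j) hsupp (fun i a => a * lk i u)
    (fun i _ => by simp)]
  rw [← Fin.sum_univ_eq_sum_range (fun i => (c j) i * lk i u) d₀]


/-- **Proposition (DeepONet encoder construction).** Let `X` be a separable Banach
space, `{ℓ_k} ⊆ X^*` with dense span, and `μ` a Borel probability measure satisfying
Assumption (d). Then there exist `d₀ ∈ ℕ`, coefficients `a_{jk}`, biases `b_j` and a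
constant `c > 0` such that the affine encoder `E_j(u) = b_j + ∑_k a_{jk} ℓ_k(u)`
satisfies `E_#μ ≥ c · Unif([0,1]^d)`. -/
theorem encoder_don
    {X : Type*} [NormedAddCommGroup X] [NormedSpace ℝ X] [CompleteSpace X]
    [SecondCountableTopology X] [MeasurableSpace X] [BorelSpace X]
    (lk : ℕ → X →L[ℝ] ℝ)
    (hdense : Dense (Submodule.span ℝ (Set.range lk) : Set (X →L[ℝ] ℝ)))
    (d : ℕ) (hd : 1 ≤ d)
    (μ : Measure X) [IsProbabilityMeasure μ]
    (hass : ∃ (e : Fin d → X) (estar : Fin d → X →L[ℝ] ℝ),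
      AssumptionD μ d e fun j u => estar j u) :
    ∃ (d₀ : ℕ) (a : Fin d → Fin d₀ → ℝ) (bb : Fin d → ℝ) (c : ℝ), 0 < c ∧
      ENNReal.ofReal c • cubeVol d ≤
        Measure.map (fun u (j : Fin d) => bb j + ∑ k : Fin d₀, a j k * lk (k : ℕ) u) μ := by
  obtain ⟨e, estar, hli, hbio, ρ, hρ, hlow, Ξ, mΞ, P, hPprob, y, ξv, hy, hξ, hindep,
    hymap, hξ0, hμ⟩ := hass
  choose α β hαβ εv hεv hae using hlow
  set η : Fin d → ℝ := fun j => (β j - α j) / 4 with hη_def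
  have hη : ∀ j, 0 < η j := fun j => by
    have := hαβ j
    simp only [hη_def]
    linarith
  obtain ⟨f, hfspan, hfbio⟩ := exists_biorth_span lk hdense e estar (fun j k => hbio j k)
  -- the random shift r and a positive cube for its law
  set r : Ξ → Fin d → ℝ := fun ω j => f j (ξv ω) with hr_def
  have hr : Measurable r := measurable_pi_lambda _ fun j => ((f j).continuous.measurable).comp hξ
  haveI hrprob : IsProbabilityMeasure (Measure.map r P) := Measure.isProbabilityMeasure_map hr.aemeasurable
  obtain ⟨t, hpt⟩ := exists_cube_pos (Measure.map r P) η hη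
  set R : Set (Fin d → ℝ) := Set.Icc t (fun j => t j + η j) with hR_def
  have hRm : MeasurableSet R := measurableSet_Icc
  set sh : Fin d → ℝ := fun j => t j + (α j + β j) / 2 - η j with hsh_def
  obtain ⟨d₀, A, hA⟩ := exists_fin_rep lk f hfspan
  set cc : ℝ := (Measure.map r P R).toReal * ((∏ j, εv j) * ∏ j, 2 * η j) with hcc_def
  have hccpos : 0 < cc := by
    refine mul_pos ?_ (mul_pos (Finset.prod_pos fun j _ => hεv j)
      (Finset.prod_pos fun j _ => by have := hη j; linarith))
    exact ENNReal.toReal_pos hpt.ne' (measure_ne_top _ _)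
  refine ⟨d₀, fun j k => A j k / (2 * η j), fun j => -(sh j) / (2 * η j), cc, hccpos, ?_⟩
  -- rewrite the encoder
  set E : X → Fin d → ℝ := fun u j => (f j u - sh j) / (2 * η j) with hE_def
  have hEeq : (fun u (j : Fin d) =>
      (fun j => -(sh j) / (2 * η j)) j + ∑ k : Fin d₀,
        (fun j k => A j k / (2 * η j)) j k * lk (k : ℕ) u) = E := by
    funext u j
    simp only [hE_def]
    have h2 : ∑ k : Fin d₀, A j k / (2 * η j) * lk (k : ℕ) u
        = (∑ k : Fin d₀, A j k * lk (k : ℕ) u) / (2 * η j) := by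
      rw [Finset.sum_div]
      exact Finset.sum_congr rfl fun k _ => by ring
    rw [h2, hA j u]
    ring
  rw [hEeq]
  -- measurability of the pieces
  have hEm : Measurable E := measurable_pi_lambda _ fun j =>
    (((f j).continuous.measurable).sub_const (sh j)).div_const (2 * η j)
  set F : Ξ → X := fun ω => ξv ω + ∑ j, y ω j • e j with hF_def
  have hF : Measurable F := by
    refine hξ.add ?_
    refine Finset.measurable_sum _ fun j _ => ?_
    exact ((measurable_pi_apply j).comp hy).smul_const (e j)
  -- the product-space machinery
  haveI hprodprob : IsProbabilityMeasure (productLaw ρ) := by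
    rw [← hymap]
    exact Measure.isProbabilityMeasure_map hy.aemeasurable
  set Ψ : (Fin d → ℝ) × (Fin d → ℝ) → (Fin d → ℝ) :=
    fun x j => (x.2 j + x.1 j - sh j) / (2 * η j) with hΨ_def
  have hΨm : Measurable Ψ := measurable_pi_lambda _ fun j => by
    simp only [hΨ_def]; fun_prop
  have hindep2 : ProbabilityTheory.IndepFun r y P := by
    have hφ : Measurable fun (x : X) (j : Fin d) => f j x :=
      measurable_pi_lambda _ fun j => (f j).continuous.measurable
    have h := (hindep.comp measurable_id hφ).symm
    exact h
  have hmap_pair : Measure.map (fun ω => (r ω, y ω)) P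
      = (Measure.map r P).prod (Measure.map y P) :=
    (ProbabilityTheory.indepFun_iff_map_prod_eq_prod_map_map hr.aemeasurable
      hy.aemeasurable).mp hindep2
  -- main measure bound
  rw [Measure.le_iff]
  intro s hs
  rw [Measure.smul_apply, smul_eq_mul]
  have hcube : cubeVol d s = volume (s ∩ unitCube d) := Measure.restrict_apply hs
  rw [hcube, Measure.map_apply hEm hs]
  set B : Set (Fin d → ℝ) := s ∩ unitCube d with hB_def
  have hBm : MeasurableSet B := hs.inter measurableSet_Icc
  have hBsub : B ⊆ Set.Icc 0 1 := fun z hz => hz.2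
  have hmono2 : μ (E ⁻¹' B) ≤ μ (E ⁻¹' s) :=
    measure_mono (Set.preimage_mono Set.inter_subset_left)
  refine le_trans ?_ hmono2
  -- pass to P
  rw [hμ, Measure.map_apply hF (hEm hBm)]
  set Q : Set ((Fin d → ℝ) × (Fin d → ℝ)) := Ψ ⁻¹' B with hQ_def
  have hQm : MeasurableSet Q := hΨm hBm
  have hEF : F ⁻¹' (E ⁻¹' B) = (fun ω => (r ω, y ω)) ⁻¹' Q := by
    ext ω
    simp only [Set.mem_preimage, hQ_def]
    have : E (F ω) = Ψ (r ω, y ω) := by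
      funext j
      simp only [hE_def, hΨ_def, hF_def]
      congr 1
      have hfF : f j (ξv ω + ∑ k, y ω k • e k) = r ω j + y ω j := by
        rw [map_add, map_sum]
        simp only [_root_.map_smul, smul_eq_mul, hfbio, mul_ite, mul_one, mul_zero]
        rw [Finset.sum_ite_eq]
        simp [hr_def]
      rw [hfF]
      ring
    rw [this]
  rw [hEF]
  have hstep : P ((fun ω => (r ω, y ω)) ⁻¹' ((R ×ˢ Set.univ) ∩ Q)) ≤
      P ((fun ω => (r ω, y ω)) ⁻¹' Q) :=
    measure_mono (Set.preimage_mono Set.inter_subset_right)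
  refine le_trans ?_ hstep
  have hQRm : MeasurableSet ((R ×ˢ Set.univ) ∩ Q) := (hRm.prod MeasurableSet.univ).inter hQm
  rw [← Measure.map_apply (hr.prodMk hy) hQRm, hmap_pair, hymap,
    Measure.prod_apply hQRm]
  -- slice bound
  set K : ℝ≥0∞ := ENNReal.ofReal (∏ j, εv j) * (ENNReal.ofReal (∏ j, |2 * η j|) * volume B)
    with hK_def
  have hslice : ∀ x ∈ R, K ≤ productLaw ρ (Prod.mk x ⁻¹' ((R ×ˢ Set.univ) ∩ Q)) := by
    intro x hx
    have hxslice : Prod.mk x ⁻¹' ((R ×ˢ Set.univ) ∩ Q)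
        = (fun (z : Fin d → ℝ) (j : Fin d) => (z j - (sh j - x j)) / (2 * η j)) ⁻¹' B := by
      ext z
      simp only [Set.mem_preimage, Set.mem_inter_iff, Set.mem_prod, Set.mem_univ, and_true,
        hQ_def, hx, true_and]
      have : Ψ (x, z) = fun j => (z j - (sh j - x j)) / (2 * η j) := by
        funext j
        simp only [hΨ_def]
        ring_nf
      rw [this]
    rw [hxslice]
    set S : Set (Fin d → ℝ) :=
      (fun (z : Fin d → ℝ) (j : Fin d) => (z j - (sh j - x j)) / (2 * η j)) ⁻¹' B with hS_def
    have hSm : MeasurableSet S := by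
      refine (measurable_pi_lambda _ fun j => ?_) hBm
      exact ((measurable_pi_apply j).sub_const _).div_const _
    have hSsub : S ⊆ Set.univ.pi fun j => Set.Icc (α j) (β j) := by
      intro z hz
      intro j _
      have hw := hBsub hz
      have hw0 : (0 : ℝ) ≤ (z j - (sh j - x j)) / (2 * η j) := hw.1 j
      have hw1 : (z j - (sh j - x j)) / (2 * η j) ≤ 1 := hw.2 j
      have hx0 : t j ≤ x j := hx.1 j
      have hx1 : x j ≤ t j + η j := hx.2 j
      have h2η : (0 : ℝ) < 2 * η j := by have := hη j; linarith
      have hnum : z j - (sh j - x j) = (2 * η j) * ((z j - (sh j - x j)) / (2 * η j)) := by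
        rw [mul_div_cancel₀ _ h2η.ne']
      have hz0 : 0 ≤ z j - (sh j - x j) := by
        rw [hnum]; exact mul_nonneg h2η.le hw0
      have hz1 : z j - (sh j - x j) ≤ 2 * η j := by
        rw [hnum]
        calc (2 * η j) * ((z j - (sh j - x j)) / (2 * η j)) ≤ (2 * η j) * 1 :=
              mul_le_mul_of_nonneg_left hw1 h2η.le
          _ = 2 * η j := mul_one _
      have hshj : sh j = t j + (α j + β j) / 2 - η j := rfl
      have hηj : η j = (β j - α j) / 4 := rfl
      simp only [hsh_def, hη_def] at hz0 hz1 hx0 hx1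
      constructor
      · linarith [hz0, hx1]
      · linarith [hz1, hx0]
    have hbound := productLaw_lower ρ α β εv hεv hae hSm hSsub
    have hvol : volume S = ENNReal.ofReal (∏ j, |2 * η j|) * volume B := by
      rw [hS_def]
      exact vol_affine_preimage (fun j => 2 * η j) (fun j => sh j - x j)
        (fun j => by have := hη j; positivity) B
    rw [hK_def, ← hvol]
    exact hbound
  -- assemble
  have habs : (∏ j, |2 * η j|) = ∏ j, 2 * η j :=
    Finset.prod_congr rfl fun j _ => abs_of_pos (by have := hη j; linarith)
  have hofcc : ENNReal.ofReal cc = Measure.map r P R *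
      (ENNReal.ofReal (∏ j, εv j) * ENNReal.ofReal (∏ j, 2 * η j)) := by
    rw [hcc_def, ENNReal.ofReal_mul ENNReal.toReal_nonneg,
      ENNReal.ofReal_toReal (measure_ne_top _ _),
      ENNReal.ofReal_mul (Finset.prod_nonneg fun j _ => (hεv j).le)]
  have hslice_meas : Measurable fun x => productLaw ρ (Prod.mk x ⁻¹' ((R ×ˢ Set.univ) ∩ Q)) :=
    measurable_measure_prodMk_left hQRm
  calc ENNReal.ofReal cc * volume B
      = K * Measure.map r P R := by
        rw [hofcc, hK_def, habs]; ring
    _ = ∫⁻ _ in R, K ∂(Measure.map r P) := (setLIntegral_const R K).symm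
    _ ≤ ∫⁻ x in R, productLaw ρ (Prod.mk x ⁻¹' ((R ×ˢ Set.univ) ∩ Q)) ∂(Measure.map r P) :=
        setLIntegral_mono_ae hslice_meas.aemeasurable (Filter.Eventually.of_forall hslice)
    _ ≤ ∫⁻ x, productLaw ρ (Prod.mk x ⁻¹' ((R ×ˢ Set.univ) ∩ Q)) ∂(Measure.map r P) :=
        setLIntegral_le_lintegral _ _

end
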